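/- Let G = G[F,V_k,H_v] be the graph with k pockets, where |V_k| = k. Then for every complex number x that is not an eigenvalue of A(H_1), the A-characteristic polynomial of G satisfies f_{A(G)}(x) = (f_{A(H_1)}(x))^k · det(x I_n − M), where M = A(F) + Γ_{A(H_1)}(x) · P and P is the n×n block-diagonal matrix diag(I_k, 0) taken with respect to an ordering of the vertices of F that lists v_1,…,v_k first. -/

import Mathlib

open Matrix BigOperators
open scoped Classical
open scoped Kronecker

/-- The adjacency matrix of a simple graph, with entries in `R`. -/
noncomputable def adjMat (R : Type*) [Zero R] [One R] {V : Type*} [Fintype V]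
    (G : SimpleGraph V) : Matrix V V R :=
  Matrix.of fun x y => if G.Adj x y then (1 : R) else 0

/-- The degree of a vertex. -/
noncomputable def gdeg {V : Type*} [Fintype V] (G : SimpleGraph V) (x : V) : ℕ :=
  (Finset.univ.filter fun y => G.Adj x y).card

/-- `G` is `r`-regular. -/
def IsReg {V : Type*} [Fintype V] (G : SimpleGraph V) (r : ℕ) : Prop :=
  ∀ x, gdeg G x = r

/-- The signless Laplacian matrix `Q(G) = D(G) + A(G)`. -/
noncomputable def qMat (R : Type*) [AddMonoidWithOne R] {V : Type*} [Fintype V]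
    (G : SimpleGraph V) : Matrix V V R :=
  Matrix.diagonal (fun x => (gdeg G x : R)) + adjMat R G

/-- The adjacency spectrum, as the multiset of real roots (with multiplicity) of the
characteristic polynomial of the (real symmetric) adjacency matrix. -/
noncomputable def aSpec {V : Type*} [Fintype V] (G : SimpleGraph V) : Multiset ℝ :=
  (adjMat ℝ G).charpoly.roots

/-- The signless Laplacian spectrum. -/
noncomputable def qSpec {V : Type*} [Fintype V] (G : SimpleGraph V) : Multiset ℝ :=
  (qMat ℝ G).charpoly.roots

/-- The `M`-coronal `Γ_M(x) = 1ᵀ (xI − M)⁻¹ 1`, the sum of the entries of `(xI − M)⁻¹`. -/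
noncomputable def coronal {n R : Type*} [Fintype n] [DecidableEq n] [Field R]
    (M : Matrix n n R) (x : R) : R :=
  ∑ i, ∑ j, ((x • (1 : Matrix n n R) - M)⁻¹) i j

/-- Embeds a `P × P` matrix as a `V × V` matrix supported on the image of `g`, zero elsewhere.
If the vertices of `V` are ordered listing the image of `g` first, this is `diag(M, 0)`. -/
noncomputable def embedMatrix {P V R : Type*} [Fintype P] [AddCommMonoid R]
    (g : P → V) (M : Matrix P P R) : Matrix V V R :=
  Matrix.of fun x y => ∑ px : P, ∑ py : P, if x = g px ∧ y = g py then M px py else 0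

/-- The graph `H − v` obtained by deleting the vertex `v`. -/
def delVert {W : Type*} (H : SimpleGraph W) (v : W) : SimpleGraph {w : W // w ≠ v} :=
  H.comap Subtype.val

/-- The graph `H − {u,v}` obtained by deleting the two vertices `u, v`. -/
def delVert2 {W : Type*} (H : SimpleGraph W) (u v : W) :
    SimpleGraph {w : W // w ≠ u ∧ w ≠ v} :=
  H.comap Subtype.val

/-- The join `G₁ ∨ G₂` of two vertex-disjoint graphs: their disjoint union together with all
edges between the two parts. -/
def sgJoin {α β : Type*} (G₁ : SimpleGraph α) (G₂ : SimpleGraph β) : SimpleGraph (α ⊕ β) where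
  Adj x y :=
    match x, y with
    | Sum.inl a, Sum.inl b => G₁.Adj a b
    | Sum.inl _, Sum.inr _ => True
    | Sum.inr _, Sum.inl _ => True
    | Sum.inr a, Sum.inr b => G₂.Adj a b
  symm := ⟨by
    rintro (a | a) (b | b) h
    · exact G₁.symm.symm _ _ h
    · trivial
    · trivial
    · exact G₂.symm.symm _ _ h⟩
  loopless := ⟨by
    rintro (a | a) h
    · exact G₁.loopless.irrefl a h
    · exact G₂.loopless.irrefl a h⟩

/-- The graph `G[F, V_k, H_v]` with `k` pockets: take one copy of `F` and `k` disjoint copies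
of `H` (with specified vertex `v`), identifying the vertex `v` of the `i`-th copy with the
vertex `f i` of `F`.  The `i`-th copy of `H − v` is carried by `{i} × {w // w ≠ v}`. -/
def pocketGraph {V W : Type*} (F : SimpleGraph V) (H : SimpleGraph W) (v : W)
    {k : ℕ} (f : Fin k ↪ V) : SimpleGraph (V ⊕ (Fin k × {w : W // w ≠ v})) where
  Adj x y :=
    match x, y with
    | Sum.inl a, Sum.inl b => F.Adj a b
    | Sum.inl a, Sum.inr (i, w) => a = f i ∧ H.Adj v w.1
    | Sum.inr (i, w), Sum.inl a => a = f i ∧ H.Adj v w.1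
    | Sum.inr (i, w), Sum.inr (j, w') => i = j ∧ H.Adj w.1 w'.1
  symm := ⟨by
    rintro (a | ⟨i, w⟩) (b | ⟨j, w'⟩) h
    · exact F.symm.symm _ _ h
    · exact h
    · exact h
    · exact ⟨h.1.symm, H.symm.symm _ _ h.2⟩⟩
  loopless := ⟨by
    rintro (a | ⟨i, w⟩) h
    · exact F.loopless.irrefl a h
    · exact H.loopless.irrefl _ h.2⟩

/-- The graph `G[F, E_k, H_{uv}]` with `k` edge-pockets: take one copy of `F` and `k` disjoint
copies of `H` (with specified edge `uv`), pasting the edge `uv` of the `i`-th copy onto the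
edge `e_i = (a i)(b i)` of `F` (identifying `u` with `a i` and `v` with `b i`).  The `i`-th
copy of `H − {u,v}` is carried by `{i} × {w // w ≠ u ∧ w ≠ v}`. -/
def edgePocketGraph {V W : Type*} (F : SimpleGraph V) (H : SimpleGraph W) (u v : W)
    {k : ℕ} (a b : Fin k → V) :
    SimpleGraph (V ⊕ (Fin k × {w : W // w ≠ u ∧ w ≠ v})) where
  Adj x y :=
    match x, y with
    | Sum.inl s, Sum.inl t => F.Adj s t
    | Sum.inl s, Sum.inr (i, w) => (s = a i ∧ H.Adj u w.1) ∨ (s = b i ∧ H.Adj v w.1)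
    | Sum.inr (i, w), Sum.inl s => (s = a i ∧ H.Adj u w.1) ∨ (s = b i ∧ H.Adj v w.1)
    | Sum.inr (i, w), Sum.inr (j, w') => i = j ∧ H.Adj w.1 w'.1
  symm := ⟨by
    rintro (s | ⟨i, w⟩) (t | ⟨j, w'⟩) h
    · exact F.symm.symm _ _ h
    · exact h
    · exact h
    · exact ⟨h.1.symm, H.symm.symm _ _ h.2⟩⟩
  loopless := ⟨by
    rintro (s | ⟨i, w⟩) h
    · exact F.loopless.irrefl s h
    · exact H.loopless.irrefl _ h.2⟩

/-- Proposition 3.1. For `G = G[F, V_k, H_v]` and any complex `x` that is not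
an eigenvalue of `A(H₁)` (`H₁ = H_v − v`),
`f_{A(G)}(x) = f_{A(H₁)}(x)^k ⬝ det(x Iₙ − (A(F) + Γ_{A(H₁)}(x) · diag(I_k, 0)))`. -/
theorem adj_charpoly_pocketGraph
    {V W : Type*} [Fintype V] [DecidableEq V] [Fintype W] [DecidableEq W]
    (n m k : ℕ) (hn : Fintype.card V = n) (hm : Fintype.card W = m) (hm2 : 2 ≤ m)
    (F : SimpleGraph V) (H : SimpleGraph W) (v : W)
    (hdeg : ∀ w : W, w ≠ v → H.Adj v w)
    (f : Fin k ↪ V)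
    (x : ℂ)
    (hx : (x • (1 : Matrix {w : W // w ≠ v} {w : W // w ≠ v} ℂ)
            - adjMat ℂ (delVert H v)).det ≠ 0) :
    (x • (1 : Matrix (V ⊕ (Fin k × {w : W // w ≠ v})) (V ⊕ (Fin k × {w : W // w ≠ v})) ℂ)
        - adjMat ℂ (pocketGraph F H v f)).det
      = ((x • (1 : Matrix {w : W // w ≠ v} {w : W // w ≠ v} ℂ)
            - adjMat ℂ (delVert H v)).det) ^ k
        * (x • (1 : Matrix V V ℂ)
            - (adjMat ℂ F
                + coronal (adjMat ℂ (delVert H v)) x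
                    • embedMatrix (f : Fin k → V) (1 : Matrix (Fin k) (Fin k) ℂ))).det := by
  classical
  set S := {w : W // w ≠ v} with hS
  set N : Matrix S S ℂ := x • 1 - adjMat ℂ (delVert H v) with hNdef
  set A : Matrix V V ℂ := x • 1 - adjMat ℂ F with hAdef
  set B : Matrix V (Fin k × S) ℂ :=
    Matrix.of (fun a p => -(if a = f p.1 then (1:ℂ) else 0)) with hBdef
  set C : Matrix (Fin k × S) V ℂ :=
    Matrix.of (fun p a => -(if a = f p.1 then (1:ℂ) else 0)) with hCdef
  set D : Matrix (Fin k × S) (Fin k × S) ℂ := (1 : Matrix (Fin k) (Fin k) ℂ) ⊗ₖ N with hDdef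
  have hM : x • (1 : Matrix (V ⊕ (Fin k × S)) (V ⊕ (Fin k × S)) ℂ)
      - adjMat ℂ (pocketGraph F H v f) = Matrix.fromBlocks A B C D := by
    ext i j
    rcases i with a | ⟨i, w⟩ <;> rcases j with b | ⟨j, w'⟩
    · simp [hAdef, adjMat, pocketGraph, Matrix.one_apply]
      exact if_congr Iff.rfl rfl rfl
    · simp [hBdef, adjMat, pocketGraph, Matrix.one_apply, hdeg _ w'.2]
    · simp [hCdef, adjMat, pocketGraph, Matrix.one_apply, hdeg _ w.2]
    · simp only [Matrix.sub_apply, Matrix.smul_apply, Matrix.one_apply, hDdef,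
        Matrix.fromBlocks_apply₂₂, Matrix.kroneckerMap_apply, adjMat, Matrix.of_apply,
        pocketGraph, delVert, SimpleGraph.comap_adj, smul_eq_mul, hNdef, Prod.mk.injEq]
      rcases eq_or_ne i j with rfl | hij
      · simp
      · simp [hij]
  have hNunit : IsUnit N.det := Ne.isUnit hx
  have hDdet : D.det = N.det ^ k := by
    rw [hDdef, Matrix.det_kronecker]
    simp
  have : Invertible D := D.invertibleOfIsUnitDet (by rw [hDdet]; exact hNunit.pow k)
  have h1inv : (1 : Matrix (Fin k) (Fin k) ℂ)⁻¹ = 1 := Matrix.inv_eq_right_inv (by simp)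
  have hDinv : ⅟ D = (1 : Matrix (Fin k) (Fin k) ℂ) ⊗ₖ N⁻¹ := by
    rw [Matrix.invOf_eq_nonsing_inv, hDdef, Matrix.inv_kronecker, h1inv]
  have hΓ : coronal (adjMat ℂ (delVert H v)) x = ∑ w : S, ∑ w' : S, N⁻¹ w w' := rfl
  have hE : ∀ a b : V, embedMatrix (f : Fin k → V) (1 : Matrix (Fin k) (Fin k) ℂ) a b
      = ∑ i, (if a = f i then (1:ℂ) else 0) * (if b = f i then (1:ℂ) else 0) := by
    intro a b
    unfold embedMatrix
    simp only [Matrix.of_apply, Matrix.one_apply]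
    refine Finset.sum_congr rfl fun px _ => ?_
    refine Eq.trans (b := ∑ py, if px = py then ((if a = f px then (1:ℂ) else 0) * (if b = f py then 1 else 0)) else 0)
      (Finset.sum_congr rfl fun py _ => by split_ifs <;> simp_all) ?_
    simp [Finset.sum_ite_eq]
  have hBX : ∀ (a : V) (q : Fin k × S),
      (B * ((1 : Matrix (Fin k) (Fin k) ℂ) ⊗ₖ N⁻¹)) a q
        = -(if a = f q.1 then (1:ℂ) else 0) * ∑ w : S, N⁻¹ w q.2 := by
    intro a q
    rw [Matrix.mul_apply, Fintype.sum_prod_type]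
    rw [show (∑ i : Fin k, ∑ w : S,
          B a (i, w) * ((1 : Matrix (Fin k) (Fin k) ℂ) ⊗ₖ N⁻¹) (i, w) q)
        = ∑ i : Fin k, if i = q.1 then
            (-(if a = f i then (1:ℂ) else 0) * ∑ w : S, N⁻¹ w q.2) else 0
      from Finset.sum_congr rfl fun i _ => by
        simp only [hBdef, Matrix.of_apply, Matrix.kroneckerMap_apply, Matrix.one_apply]
        split_ifs <;> simp [Finset.mul_sum]
      ]
    rw [Finset.sum_ite_eq' Finset.univ q.1]
    simp
  have hBC : B * ((1 : Matrix (Fin k) (Fin k) ℂ) ⊗ₖ N⁻¹) * C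
      = coronal (adjMat ℂ (delVert H v)) x •
          embedMatrix (f : Fin k → V) (1 : Matrix (Fin k) (Fin k) ℂ) := by
    ext a b
    rw [Matrix.mul_apply, Fintype.sum_prod_type]
    simp only [Matrix.smul_apply, smul_eq_mul, hE, hBX, hCdef, Matrix.of_apply, Finset.mul_sum]
    refine Finset.sum_congr rfl fun j _ => ?_
    have hterm : ∀ w' : S,
        (∑ w : S, (-(if a = f j then (1:ℂ) else 0)) * N⁻¹ w w') * (-(if b = f j then (1:ℂ) else 0))
          = ((if a = f j then (1:ℂ) else 0) * (if b = f j then (1:ℂ) else 0)) * ∑ w : S, N⁻¹ w w' :=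
      fun w' => by rw [← Finset.mul_sum]; ring
    simp only [hterm]
    rw [← Finset.mul_sum, hΓ, Finset.sum_comm, mul_comm]
  rw [hM, Matrix.det_fromBlocks₂₂, hDdet, hDinv, hBC]
  congr 1
  rw [hAdef, sub_sub]
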